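/- Let λ be a partition, σ ∈ S_{ℓ(λ)}, and 1 ≤ i ≤ ℓ(λ)−1 with ℓ(σs_i) < ℓ(σ). Then the bijection ψ^{σs_i}_σ := φ_{σs_i} ∘ ρ_σ maps the set SPCT^σ(α) bijectively onto the disjoint union ⨆_{β : α = β∙π_i} SPCT^{σs_i}(β), for every composition α with sorted rearrangement λ; moreover ψ^{σs_i}_σ preserves descent sets. -/

import Mathlib

/-- `α` is compatible with `σ`: `α_i ≥ α_j` whenever `i < j` and `σ(i) > σ(j)`. -/
def Compatible {ℓ : ℕ} (α : Fin ℓ → ℕ) (σ : Equiv.Perm (Fin ℓ)) : Prop :=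
  ∀ i j : Fin ℓ, i < j → σ j < σ i → α j ≤ α i

/-- `τ` is a standard permuted composition tableau (SPCT) of shape `α` (a composition of `n`
with `ℓ` rows, row `i` having boxes in columns `0,…,α i − 1`) and type `σ`:
the boxes are filled with the distinct entries `1,…,n`; the standardization of the first
column read top to bottom is `σ` (expressed by order-equivalence with `σ`); rows weakly
decrease left to right; and the triple condition holds. -/
def IsSPCT {ℓ : ℕ} (n : ℕ) (α : Fin ℓ → ℕ) (σ : Equiv.Perm (Fin ℓ))
    (τ : Fin ℓ → ℕ → ℕ) : Prop :=
  (∀ (i : Fin ℓ) (c : ℕ), c < α i → 1 ≤ τ i c ∧ τ i c ≤ n) ∧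
  (∀ (i : Fin ℓ) (c : ℕ) (i' : Fin ℓ) (c' : ℕ),
      c < α i → c' < α i' → τ i c = τ i' c' → i = i' ∧ c = c') ∧
  (∀ v : ℕ, 1 ≤ v → v ≤ n → ∃ (i : Fin ℓ) (c : ℕ), c < α i ∧ τ i c = v) ∧
  (∀ i i' : Fin ℓ, τ i 0 < τ i' 0 ↔ σ i < σ i') ∧
  (∀ (i : Fin ℓ) (c : ℕ), c + 1 < α i → τ i (c + 1) ≤ τ i c) ∧
  (∀ (i i' : Fin ℓ) (c : ℕ), i < i' → c < α i → c + 1 < α i' →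
      τ i' (c + 1) < τ i c → c + 1 < α i ∧ τ i' (c + 1) < τ i (c + 1))

/-- `d` is a descent of `τ`: the entry `d+1` lies weakly to the right of `d`. -/
def IsDescent {ℓ : ℕ} (α : Fin ℓ → ℕ) (τ : Fin ℓ → ℕ → ℕ) (d : ℕ) : Prop :=
  ∃ (i : Fin ℓ) (c : ℕ) (i' : Fin ℓ) (c' : ℕ),
    c < α i ∧ c' < α i' ∧ τ i c = d ∧ τ i' c' = d + 1 ∧ c ≤ c'

/-- `τ` is a source tableau: an SPCT such that for every non-descent `d ≠ n`, the entry
`d+1` lies in the box immediately to the left of the box containing `d`. -/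
def IsSourceTableau {ℓ : ℕ} (n : ℕ) (α : Fin ℓ → ℕ) (σ : Equiv.Perm (Fin ℓ))
    (τ : Fin ℓ → ℕ → ℕ) : Prop :=
  IsSPCT n α σ τ ∧
  ∀ d : ℕ, 1 ≤ d → d + 1 ≤ n → ¬ IsDescent α τ d →
    ∀ (i : Fin ℓ) (c : ℕ), c < α i → τ i c = d → ∃ c', c = c' + 1 ∧ τ i c' = d + 1

/-- `(i,j)` is a permutation-ascending composition-descending (PACD) pair for `(α; σ)`. -/
def PACD {ℓ : ℕ} (α : Fin ℓ → ℕ) (σ : Equiv.Perm (Fin ℓ)) (i j : Fin ℓ) : Prop :=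
  i < j ∧ σ i < σ j ∧ 2 ≤ α j ∧ α j ≤ α i

/-- `α` is `σ`-simple: it is compatible with `σ` and every PACD pair satisfies C1 or C2. -/
def SigmaSimple {ℓ : ℕ} (α : Fin ℓ → ℕ) (σ : Equiv.Perm (Fin ℓ)) : Prop :=
  Compatible α σ ∧
  ∀ i j : Fin ℓ, PACD α σ i j →
    (∃ k, i < k ∧ k < j ∧ σ i < σ k ∧ σ k < σ j ∧ α k = α j - 1) ∨
    (∃ k, j < k ∧ σ i < σ k ∧ σ k < σ j ∧ α k = α j)

/-- The part `α_j` has a removable node with respect to `σ`: either `σ(j) = 1`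
(the smallest value, `0` in `Fin ℓ`), or `α_j ≥ 2`, no `k < j` has `σ(k) < σ(j)` and
`α_k = α_j − 1`, and no `k > j` has `σ(k) < σ(j)` and `α_k = α_j`. -/
def Removable {ℓ : ℕ} (α : Fin ℓ → ℕ) (σ : Equiv.Perm (Fin ℓ)) (j : Fin ℓ) : Prop :=
  (σ j : ℕ) = 0 ∨
  (2 ≤ α j ∧ (∀ k, k < j → σ k < σ j → α k ≠ α j - 1) ∧
    (∀ k, j < k → σ k < σ j → α k ≠ α j))

/-- The canonical source tableau `τ^σ_{C,α}`: row `r` is filled, in decreasing order from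
left to right, with the consecutive block of integers following all entries of rows `r'`
with `σ r' < σ r`. -/
def canonEntry {ℓ : ℕ} (α : Fin ℓ → ℕ) (σ : Equiv.Perm (Fin ℓ)) (r : Fin ℓ) (c : ℕ) : ℕ :=
  (∑ j ∈ Finset.univ.filter (fun j => σ j < σ r), α j) + α r - c

/-- The bubble-sorting operator `β ∙ πᵢ` (0-based indices). -/
def bub {ℓ : ℕ} (i : ℕ) (α : Fin ℓ → ℕ) : Fin ℓ → ℕ :=
  if h : i + 1 < ℓ then
    if α ⟨i, Nat.lt_of_succ_lt h⟩ < α ⟨i + 1, h⟩ then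
      fun x => α (Equiv.swap (⟨i, Nat.lt_of_succ_lt h⟩ : Fin ℓ) ⟨i + 1, h⟩ x)
    else α
  else α

/-- The simple transposition `sᵢ ∈ S_ℓ` (0-based). -/
def sPerm (ℓ : ℕ) (i : ℕ) : Equiv.Perm (Fin ℓ) :=
  if h : i + 1 < ℓ then Equiv.swap ⟨i, Nat.lt_of_succ_lt h⟩ ⟨i + 1, h⟩ else 1

/-- The Coxeter length of a permutation = its number of inversions. -/
def permLength {ℓ : ℕ} (σ : Equiv.Perm (Fin ℓ)) : ℕ :=
  (Finset.univ.filter (fun p : Fin ℓ × Fin ℓ => p.1 < p.2 ∧ σ p.2 < σ p.1)).card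

/-- Two fillings have the same set of entries in every column. -/
def SameColumns {ℓ : ℕ} (α β : Fin ℓ → ℕ) (τ τ' : Fin ℓ → ℕ → ℕ) : Prop :=
  ∀ (c v : ℕ), (∃ r, c < α r ∧ τ r c = v) ↔ (∃ r, c < β r ∧ τ' r c = v)

section Aux
open Finset
variable {ℓ n : ℕ} {α β : Fin ℓ → ℕ} {σ : Equiv.Perm (Fin ℓ)} {τ τ' : Fin ℓ → ℕ → ℕ}

lemma rowLe (h : IsSPCT n α σ τ) {r : Fin ℓ} {c c' : ℕ} (hcc : c ≤ c') (hc' : c' < α r) :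
    τ r c' ≤ τ r c := by
  induction c' with
  | zero => simp_all
  | succ d ih =>
    rcases Nat.eq_or_lt_of_le hcc with h1 | h1
    · exact le_of_eq (by rw [h1])
    · exact le_trans (h.2.2.2.2.1 r d hc') (ih (by omega) (by omega))

lemma rowLt (h : IsSPCT n α σ τ) {r : Fin ℓ} {c c' : ℕ} (hcc : c < c') (hc' : c' < α r) :
    τ r c' < τ r c := by
  refine lt_of_le_of_ne (rowLe h (le_of_lt hcc) hc') fun he => ?_
  have := (h.2.1 r c' r c hc' (by omega) he).2
  omega

lemma colDom (h : IsSPCT n α σ τ) (hpos : ∀ r, 0 < α r) {a b : Fin ℓ}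
    (hab : a < b) (hσ : σ b < σ a) : ∀ c, c < α b → c < α a ∧ τ b c < τ a c := by
  intro c
  induction c with
  | zero => exact fun _ => ⟨hpos a, (h.2.2.2.1 b a).mpr hσ⟩
  | succ d ih =>
    intro hc
    obtain ⟨hda, hlt⟩ := ih (by omega)
    exact h.2.2.2.2.2 a b d hab hda hc
      (lt_of_le_of_lt (h.2.2.2.2.1 b d hc) hlt)

lemma card_lt_perm (σ : Equiv.Perm (Fin ℓ)) (x : Fin ℓ) :
    (Finset.univ.filter (fun s => σ s < x)).card = (x : ℕ) := by
  rw [← Fin.card_Iio (b := x)]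
  apply Finset.card_bij (fun s _ => σ s)
  · intro a ha; simp only [mem_filter] at ha; simpa using ha.2
  · intro a _ b _ hab; exact σ.injective hab
  · intro b hb; exact ⟨σ.symm b, by simpa using hb, by simp⟩

lemma descent_transfer (hcol : SameColumns α β τ τ') {d : ℕ}
    (h : IsDescent α τ d) : IsDescent β τ' d := by
  obtain ⟨r, c, r', c', h1, h2, h3, h4, h5⟩ := h
  obtain ⟨s, hs1, hs2⟩ := (hcol c d).mp ⟨r, h1, h3⟩
  obtain ⟨s', hs1', hs2'⟩ := (hcol c' (d+1)).mp ⟨r', h2, h4⟩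
  exact ⟨s, c, s', c', hs1, hs1', hs2, hs2', h5⟩

lemma samecol_symm (hcol : SameColumns α β τ τ') : SameColumns β α τ' τ :=
  fun c v => (hcol c v).symm

lemma samecol_trans {γ : Fin ℓ → ℕ} {τ'' : Fin ℓ → ℕ → ℕ} (h1 : SameColumns α β τ τ')
    (h2 : SameColumns β γ τ' τ'') : SameColumns α γ τ τ'' :=
  fun c v => (h1 c v).trans (h2 c v)

end Aux
section Unique
open Finset
variable {ℓ n : ℕ} {α β : Fin ℓ → ℕ} {σ : Equiv.Perm (Fin ℓ)} {τ τ' : Fin ℓ → ℕ → ℕ}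

lemma spct_unique (h : IsSPCT n α σ τ) (h' : IsSPCT n β σ τ')
    (hpα : ∀ r, 0 < α r) (hpβ : ∀ r, 0 < β r) (hcol : SameColumns α β τ τ') :
    α = β ∧ ∀ r c, c < α r → τ r c = τ' r c := by
  have main : ∀ c, ∀ r : Fin ℓ, (c < α r ↔ c < β r) ∧ (c < α r → τ r c = τ' r c) := by
    intro c
    induction c with
    | zero =>
      -- column 0: counting argument
      have hkey : ∀ r r' : Fin ℓ, τ r 0 = τ' r' 0 → r = r' := by
        intro r r' hv
        have hA : (univ.filter (fun s : Fin ℓ => τ s 0 < τ r 0)).card = (σ r : ℕ) := by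
          rw [← card_lt_perm σ (σ r)]
          congr 1; ext s
          simp only [mem_filter, mem_univ, true_and]
          rw [h.2.2.2.1]
        have hB : (univ.filter (fun s : Fin ℓ => τ' s 0 < τ' r' 0)).card = (σ r' : ℕ) := by
          rw [← card_lt_perm σ (σ r')]
          congr 1; ext s
          simp only [mem_filter, mem_univ, true_and]
          rw [h'.2.2.2.1]
        -- the two filters have the same card via images
        have himg : (univ.image fun s : Fin ℓ => τ s 0) = univ.image fun s : Fin ℓ => τ' s 0 := by
          ext v
          simp only [mem_image, mem_univ, true_and]
          constructor
          · rintro ⟨s, hs⟩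
            obtain ⟨s', _, hs'⟩ := (hcol 0 v).mp ⟨s, hpα s, hs⟩
            exact ⟨s', hs'⟩
          · rintro ⟨s, hs⟩
            obtain ⟨s', _, hs'⟩ := (hcol 0 v).mpr ⟨s, hpβ s, hs⟩
            exact ⟨s', hs'⟩
        have hinjf : Function.Injective (fun s : Fin ℓ => τ s 0) := by
          intro a b hab
          exact (h.2.1 a 0 b 0 (hpα a) (hpα b) hab).1
        have hinjg : Function.Injective (fun s : Fin ℓ => τ' s 0) := by
          intro a b hab
          exact (h'.2.1 a 0 b 0 (hpβ a) (hpβ b) hab).1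
        have e1 : (univ.filter (fun s : Fin ℓ => τ s 0 < τ r 0)).card
            = ((univ.image fun s : Fin ℓ => τ s 0).filter (fun v => v < τ r 0)).card := by
          rw [Finset.filter_image]
          exact (Finset.card_image_of_injective _ hinjf).symm
        have e2 : (univ.filter (fun s : Fin ℓ => τ' s 0 < τ' r' 0)).card
            = ((univ.image fun s : Fin ℓ => τ' s 0).filter (fun v => v < τ' r' 0)).card := by
          rw [Finset.filter_image]
          exact (Finset.card_image_of_injective _ hinjg).symm
        have : (σ r : ℕ) = (σ r' : ℕ) := by
          rw [← hA, ← hB, e1, e2, himg, hv]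
        exact σ.injective (Fin.ext this)
      intro r
      refine ⟨by simp [hpα r, hpβ r], fun _ => ?_⟩
      obtain ⟨r', _, hr'⟩ := (hcol 0 (τ r 0)).mp ⟨r, hpα r, rfl⟩
      rw [← hr', hkey r r' hr'.symm]
    | succ c ih =>
      -- key: placements at column c+1 agree
      have Q : ∀ k v (r r' : Fin ℓ), n + 1 - v ≤ k → c + 1 < α r → c + 1 < β r' →
          τ r (c+1) = v → τ' r' (c+1) = v → r = r' := by
        intro k
        induction k with
        | zero =>
          intro v r r' hk hα hβ hv _
          have := (h.1 r (c+1) hα).2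
          omega
        | succ k ihk =>
          intro v r r' hk hα hβ hv hv'
          rcases lt_trichotomy r r' with hlt | heq | hgt
          · -- work in τ'
            have hcαr : c < α r := by omega
            have hcβr : c < β r := (ih r).1.mp hcαr
            have hvlt : v < τ' r c := by
              rw [← (ih r).2 hcαr, ← hv]
              exact rowLt h (by omega) hα
            obtain ⟨hc1βr, hwlt⟩ := h'.2.2.2.2.2 r r' c hlt hcβr hβ (by rw [hv']; exact hvlt)
            set w := τ' r (c+1) with hw
            have hwn : w ≤ n := (h'.1 r (c+1) hc1βr).2
            obtain ⟨s, hs1, hs2⟩ := (hcol (c+1) w).mpr ⟨r, hc1βr, rfl⟩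
            have hsr : s = r := ihk w s r (by omega) hs1 hc1βr hs2 rfl
            rw [hsr] at hs2
            rw [hv'] at hwlt
            omega
          · exact heq
          · -- work in τ
            have hcβr' : c < β r' := by omega
            have hcαr' : c < α r' := (ih r').1.mpr hcβr'
            have hvlt : v < τ r' c := by
              rw [(ih r').2 hcαr', ← hv']
              exact rowLt h' (by omega) hβ
            obtain ⟨hc1αr', hwlt⟩ := h.2.2.2.2.2 r' r c hgt hcαr' hα (by rw [hv]; exact hvlt)
            set w := τ r' (c+1) with hw
            have hwn : w ≤ n := (h.1 r' (c+1) hc1αr').2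
            obtain ⟨s, hs1, hs2⟩ := (hcol (c+1) w).mp ⟨r', hc1αr', rfl⟩
            have hsr : r' = s := ihk w r' s (by omega) hc1αr' hs1 rfl hs2
            rw [← hsr] at hs2
            rw [hv] at hwlt
            omega
      intro r
      constructor
      · constructor
        · intro hα
          obtain ⟨r', hr1, hr2⟩ := (hcol (c+1) (τ r (c+1))).mp ⟨r, hα, rfl⟩
          have := Q (n+1) (τ r (c+1)) r r' (by omega) hα hr1 rfl hr2
          rwa [this]
        · intro hβ
          obtain ⟨r', hr1, hr2⟩ := (hcol (c+1) (τ' r (c+1))).mpr ⟨r, hβ, rfl⟩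
          have := Q (n+1) (τ' r (c+1)) r' r (by omega) hr1 hβ hr2 rfl
          rwa [← this]
      · intro hα
        obtain ⟨r', hr1, hr2⟩ := (hcol (c+1) (τ r (c+1))).mp ⟨r, hα, rfl⟩
        have := Q (n+1) (τ r (c+1)) r r' (by omega) hα hr1 rfl hr2
        rw [← hr2, this]
  constructor
  · funext r
    have h1 : ∀ c, c < α r → c < β r := fun c hc => (main c r).1.mp hc
    have h2 : ∀ c, c < β r → c < α r := fun c hc => (main c r).1.mpr hc
    by_contra hne
    rcases Nat.lt_or_ge (α r) (β r) with hl | hg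
    · have := h2 (α r) hl; omega
    · have : α r ≠ β r := hne
      have := h1 (β r) (by omega); omega
  · exact fun r c hc => (main c r).2 hc

end Unique
section Length
open Finset
variable {ℓ : ℕ}

lemma desc_of_len {σ : Equiv.Perm (Fin ℓ)} {i : ℕ} (hi : i + 1 < ℓ)
    (hlen : permLength (σ * sPerm ℓ i) < permLength σ) :
    σ ⟨i+1, hi⟩ < σ ⟨i, Nat.lt_of_succ_lt hi⟩ := by
  set I : Fin ℓ := ⟨i, Nat.lt_of_succ_lt hi⟩ with hI
  set J : Fin ℓ := ⟨i+1, hi⟩ with hJ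
  have hIJne : I ≠ J := by simp [hI, hJ, Fin.ext_iff]
  have hs : sPerm ℓ i = Equiv.swap I J := by rw [sPerm, dif_pos hi]
  by_contra hcon
  have hIJlt : σ I < σ J :=
    lt_of_le_of_ne (not_lt.mp hcon) (fun he => hIJne (σ.injective he))
  -- build an injection from inversions of σ to inversions of σ * swap I J
  set s : Equiv.Perm (Fin ℓ) := Equiv.swap I J with hsw
  have hss : ∀ x, s (s x) = x := fun x => Equiv.swap_apply_self I J x
  have key : ∀ p : Fin ℓ × Fin ℓ, p.1 < p.2 → σ p.2 < σ p.1 → s p.1 < s p.2 := by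
    rintro ⟨a, b⟩ hab hinv
    by_contra hc
    have hne : s a ≠ s b := fun he => absurd (s.injective he) (ne_of_lt hab)
    have hba : s b < s a := lt_of_le_of_ne (not_lt.mp hc) hne.symm
    -- show a = I and b = J
    have haI : a = I ∧ b = J := by
      have hav : a < b := hab
      rw [Fin.lt_def] at hav
      by_cases h1 : a = I
      · by_cases h4 : b = J
        · exact ⟨h1, h4⟩
        · exfalso
          have hbI : b ≠ I := by rintro rfl; rw [← h1] at hab; exact lt_irrefl _ hab
          rw [h1, Equiv.swap_apply_left, Equiv.swap_apply_of_ne_of_ne hbI h4] at hba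
          rw [Fin.lt_def] at hba
          rw [h1] at hav
          simp only [hI, hJ] at hba hav
          omega
      · exfalso
        by_cases h2 : a = J
        · have hbI : b ≠ I := by
            rintro rfl
            rw [h2] at hav; simp only [hI, hJ] at hav; omega
          have hbJ : b ≠ J := by rintro rfl; rw [← h2] at hab; exact lt_irrefl _ hab
          rw [h2, Equiv.swap_apply_right, Equiv.swap_apply_of_ne_of_ne hbI hbJ] at hba
          rw [Fin.lt_def] at hba
          rw [h2] at hav
          simp only [hI, hJ] at hba hav
          omega
        · rw [Equiv.swap_apply_of_ne_of_ne h1 h2] at hba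
          by_cases h3 : b = I
          · rw [h3, Equiv.swap_apply_left] at hba
            rw [Fin.lt_def] at hba
            rw [h3] at hav
            simp only [hI, hJ] at hba hav
            omega
          · by_cases h4 : b = J
            · rw [h4, Equiv.swap_apply_right] at hba
              rw [Fin.lt_def] at hba
              rw [h4] at hav
              have h1' : (a : ℕ) ≠ i := fun hh => h1 (Fin.ext hh)
              simp only [hI, hJ] at hba hav
              omega
            · rw [Equiv.swap_apply_of_ne_of_ne h3 h4] at hba
              exact absurd hab (not_lt.mpr (le_of_lt hba))
    rw [haI.1, haI.2] at hinv
    exact absurd hIJlt (not_lt.mpr (le_of_lt hinv))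
  have hmono : permLength σ ≤ permLength (σ * sPerm ℓ i) := by
    rw [hs, permLength, permLength]
    apply Finset.card_le_card_of_injOn (fun p => (s p.1, s p.2))
    · rintro ⟨a, b⟩ hp
      simp only [mem_coe, mem_filter, mem_univ, true_and] at hp ⊢
      obtain ⟨hab, hinv⟩ := hp
      refine ⟨key (a, b) hab hinv, ?_⟩
      simp only [Equiv.Perm.mul_apply, hss]
      exact hinv
    · rintro ⟨a, b⟩ ha ⟨a', b'⟩ hb he
      simp only [Prod.mk.injEq] at he
      have h1 : a = a' := s.injective he.1
      have h2 : b = b' := s.injective he.2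
      simp [h1, h2]
  omega

end Length
section Forward
open Finset
variable {ℓ n : ℕ}

lemma forwardC {α : Fin ℓ → ℕ} {σ : Equiv.Perm (Fin ℓ)} {τ : Fin ℓ → ℕ → ℕ}
    {i : ℕ} (hi : i + 1 < ℓ) (h : IsSPCT n α σ τ) (hpos : ∀ r, 0 < α r)
    (hdesc : σ ⟨i+1, hi⟩ < σ ⟨i, Nat.lt_of_succ_lt hi⟩) :
    ∃ (β : Fin ℓ → ℕ) (τ' : Fin ℓ → ℕ → ℕ),
      (β = α ∨ β = fun r => α (Equiv.swap ⟨i, Nat.lt_of_succ_lt hi⟩ ⟨i+1, hi⟩ r)) ∧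
      bub i β = α ∧
      IsSPCT n β (σ * Equiv.swap ⟨i, Nat.lt_of_succ_lt hi⟩ ⟨i+1, hi⟩) τ' ∧
      SameColumns α β τ τ' := by
  set I : Fin ℓ := ⟨i, Nat.lt_of_succ_lt hi⟩ with hIdef
  set J : Fin ℓ := ⟨i+1, hi⟩ with hJdef
  have hIJ : I < J := by simp [hIdef, hJdef, Fin.lt_def]
  have hIJne : I ≠ J := ne_of_lt hIJ
  have hout : ∀ r : Fin ℓ, r ≠ I → r ≠ J → Equiv.swap I J r = r := fun r h1 h2 =>
    Equiv.swap_apply_of_ne_of_ne h1 h2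
  have hswI : Equiv.swap I J I = J := Equiv.swap_apply_left I J
  have hswJ : Equiv.swap I J J = I := Equiv.swap_apply_right I J
  have hdom : ∀ c, c < α J → c < α I ∧ τ J c < τ I c := fun c hc =>
    colDom h hpos hIJ hdesc c hc
  have hmk : α J ≤ α I := by
    have := (hdom (α J - 1) (by have := hpos J; omega)).1
    omega
  have hgtJ : ∀ b : Fin ℓ, b ≠ J → I < b → J < b := by
    intro b h2 hb
    rw [Fin.lt_def] at hb ⊢
    have e2 : (b : ℕ) ≠ i + 1 := fun hh => h2 (Fin.ext hh)
    simp only [hIdef, hJdef] at *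
    omega
  have hltI : ∀ a : Fin ℓ, a ≠ I → a < J → a < I := by
    intro a h1 ha
    rw [Fin.lt_def] at ha ⊢
    have e1 : (a : ℕ) ≠ i := fun hh => h1 (Fin.ext hh)
    simp only [hIdef, hJdef] at *
    omega
  by_cases hex : ∃ c, 1 ≤ c ∧ c ≤ α J ∧ c < α I ∧ τ I c ≤ τ J (c-1)
  · -- CASE A : crossing exists, shape unchanged
    set t : ℕ := Nat.find hex with htdef
    obtain ⟨ht1, htm, htk, htx⟩ := Nat.find_spec hex
    rw [← htdef] at ht1 htm htk htx
    have hmin : ∀ c, c < t → ¬ (1 ≤ c ∧ c ≤ α J ∧ c < α I ∧ τ I c ≤ τ J (c-1)) :=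
      fun c hc => Nat.find_min hex hc
    set τ'f : Fin ℓ → ℕ → ℕ :=
      fun r c => if c < t then τ (Equiv.swap I J r) c else τ r c with hτ'
    have eout : ∀ r, r ≠ I → r ≠ J → ∀ c, τ'f r c = τ r c := by
      intro r h1 h2 c
      simp only [hτ']
      split_ifs with hh
      · rw [hout r h1 h2]
      · rfl
    have eIlt : ∀ c, c < t → τ'f I c = τ J c := by
      intro c hc; simp only [hτ', if_pos hc, hswI]
    have eIge : ∀ c, ¬ (c < t) → τ'f I c = τ I c := by
      intro c hc; simp only [hτ', if_neg hc]
    have eJlt : ∀ c, c < t → τ'f J c = τ I c := by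
      intro c hc; simp only [hτ', if_pos hc, hswJ]
    have eJge : ∀ c, ¬ (c < t) → τ'f J c = τ J c := by
      intro c hc; simp only [hτ', if_neg hc]
    -- box correspondence
    have hsh : ∀ (r : Fin ℓ) (d : ℕ), d < α r →
        d < α (if d < t then Equiv.swap I J r else r) := by
      intro r d hd
      by_cases hdt : d < t
      · simp only [if_pos hdt]
        by_cases h1 : r = I
        · subst h1; rw [hswI]; omega
        · by_cases h2 : r = J
          · subst h2; rw [hswJ]; omega
          · rw [hout r h1 h2]; exact hd
      · simp only [if_neg hdt]; exact hd
    have hval : ∀ (r : Fin ℓ) (d : ℕ),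
        τ'f r d = τ (if d < t then Equiv.swap I J r else r) d := by
      intro r d; simp only [hτ']; split <;> rfl
    have hval' : ∀ (r : Fin ℓ) (d : ℕ),
        τ'f (if d < t then Equiv.swap I J r else r) d = τ r d := by
      intro r d
      simp only [hτ']
      split_ifs with h1
      · rw [Equiv.swap_apply_self]
      · rfl
    refine ⟨α, τ'f, Or.inl rfl, ?_, ⟨?_, ?_, ?_, ?_, ?_, ?_⟩, ?_⟩
    · rw [bub, dif_pos hi]
      rw [if_neg (not_lt.mpr hmk)]
    · -- bounds
      intro r c hc
      rw [hval]
      exact h.1 _ c (hsh r c hc)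
    · -- injectivity
      intro a c b c' ha hb he
      rw [hval, hval] at he
      obtain ⟨hrr, hcc⟩ := h.2.1 _ c _ c' (hsh a c ha) (hsh b c' hb) he
      subst hcc
      refine ⟨?_, rfl⟩
      by_cases hct : c < t
      · simp only [if_pos hct] at hrr
        exact (Equiv.swap I J).injective hrr
      · simpa only [if_neg hct] using hrr
    · -- surjectivity
      intro v hv1 hv2
      obtain ⟨r, c, hc, hv⟩ := h.2.2.1 v hv1 hv2
      exact ⟨_, c, hsh r c hc, by rw [hval' r c]; exact hv⟩
    · -- type
      intro a b
      have e : ∀ r : Fin ℓ, τ'f r 0 = τ (Equiv.swap I J r) 0 := by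
        intro r; simp only [hτ', if_pos (show (0:ℕ) < t by omega)]
      rw [e a, e b, h.2.2.2.1 (Equiv.swap I J a) (Equiv.swap I J b)]
      simp [Equiv.Perm.mul_apply]
    · -- rows weakly decreasing
      intro r c hc
      by_cases h1 : r = I
      · subst h1
        by_cases hct : c + 1 < t
        · rw [eIlt _ hct, eIlt _ (by omega)]
          exact h.2.2.2.2.1 J c (by omega)
        · by_cases hct2 : c + 1 = t
          · rw [eIge _ hct, eIlt _ (by omega)]
            have hc' : c = t - 1 := by omega
            calc τ I (c+1) = τ I t := by rw [hct2]
            _ ≤ τ J (t-1) := htx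
            _ = τ J c := by rw [hc']
          · rw [eIge _ hct, eIge _ (by omega)]
            exact h.2.2.2.2.1 I c hc
      · by_cases h2 : r = J
        · subst h2
          by_cases hct : c + 1 < t
          · rw [eJlt _ hct, eJlt _ (by omega)]
            exact h.2.2.2.2.1 I c (by omega)
          · by_cases hct2 : c + 1 = t
            · rw [eJge _ hct, eJlt _ (by omega)]
              have e1 : τ J (c+1) ≤ τ J c := h.2.2.2.2.1 J c hc
              have e2 : τ J c < τ I c := (hdom c (by omega)).2
              omega
            · rw [eJge _ hct, eJge _ (by omega)]
              exact h.2.2.2.2.1 J c hc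
        · rw [eout r h1 h2, eout r h1 h2]
          exact h.2.2.2.2.1 r c hc
    · -- triple condition
      intro a b c hab hca hcb hlt
      by_cases haI : a = I
      · subst haI
        by_cases hbJ : b = J
        · subst hbJ
          -- pair (I, J)
          by_cases hct : c + 1 < t
          · exfalso
            rw [eJlt _ hct, eIlt _ (by omega)] at hlt
            exact hmin (c+1) hct ⟨by omega, by omega, by omega,
              by simpa using le_of_lt hlt⟩
          · by_cases hct2 : c + 1 = t
            · refine ⟨by omega, ?_⟩
              rw [eJge _ hct, eIge _ hct]
              exact (hdom (c+1) hcb).2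
            · refine ⟨by omega, ?_⟩
              rw [eJge _ hct, eIge _ hct]
              exact (hdom (c+1) hcb).2
        · -- pair (I, b), b > J
          have hbI : b ≠ I := fun hh => absurd (hh ▸ hab) (lt_irrefl I)
          have hJb : J < b := hgtJ b hbJ hab
          rw [eout b hbI hbJ] at hlt ⊢
          by_cases hct : c < t
          · rw [eIlt _ hct] at hlt
            obtain ⟨e1, e2⟩ := h.2.2.2.2.2 J b c hJb (by omega) hcb hlt
            refine ⟨by omega, ?_⟩
            by_cases hct1 : c + 1 < t
            · rw [eIlt _ hct1]; exact e2
            · rw [eIge _ hct1]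
              exact lt_trans e2 (hdom (c+1) e1).2
          · rw [eIge _ hct] at hlt
            obtain ⟨e1, e2⟩ := h.2.2.2.2.2 I b c hab hca hcb hlt
            exact ⟨e1, by rw [eIge _ (by omega)]; exact e2⟩
      · by_cases haJ : a = J
        · subst haJ
          -- pair (J, b), b > J  (b = I impossible)
          have hbI : b ≠ I := fun hh => absurd (hh ▸ hab) (not_lt.mpr (le_of_lt hIJ))
          have hbJ : b ≠ J := fun hh => absurd (hh ▸ hab) (lt_irrefl J)
          have hJb : J < b := hab
          rw [eout b hbI hbJ] at hlt ⊢
          by_cases hct : c + 1 < t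
          · rw [eJlt _ (by omega)] at hlt
            obtain ⟨e1, e2⟩ := h.2.2.2.2.2 I b c (lt_trans hIJ hJb) (by omega) hcb hlt
            exact ⟨by omega, by rw [eJlt _ hct]; exact e2⟩
          · by_cases hct2 : c + 1 = t
            · rw [eJlt _ (by omega)] at hlt
              obtain ⟨e1, e2⟩ := h.2.2.2.2.2 I b c (lt_trans hIJ hJb) (by omega) hcb hlt
              have e3 : τ b (c+1) ≤ τ J c := by
                have ea : τ I (c+1) = τ I t := by rw [hct2]
                have eb : τ J c = τ J (t-1) := by rw [show c = t - 1 by omega]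
                have := htx
                omega
              have e3' : τ b (c+1) < τ J c := by
                rcases lt_or_eq_of_le e3 with hlt' | heq
                · exact hlt'
                · exfalso
                  obtain ⟨hb1, hb2⟩ := h.2.1 b (c+1) J c hcb (by omega) heq
                  omega
              obtain ⟨e4, e5⟩ := h.2.2.2.2.2 J b c hJb (by omega) hcb e3'
              exact ⟨e4, by rw [eJge _ (by omega)]; exact e5⟩
            · rw [eJge _ (by omega)] at hlt
              obtain ⟨e1, e2⟩ := h.2.2.2.2.2 J b c hJb hca hcb hlt
              exact ⟨e1, by rw [eJge _ hct]; exact e2⟩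
        · -- a outside
          rw [eout a haI haJ] at hlt ⊢
          by_cases hbI : b = I
          · subst hbI
            have haIlt : a < I := hltI a haI (lt_trans hab hIJ)
            by_cases hct : c + 1 < t
            · rw [eIlt _ hct] at hlt ⊢
              exact h.2.2.2.2.2 a J c (lt_trans haIlt hIJ) hca (by omega) hlt
            · rw [eIge _ hct] at hlt ⊢
              exact h.2.2.2.2.2 a I c hab hca hcb hlt
          · by_cases hbJ : b = J
            · subst hbJ
              have haIlt : a < I := hltI a haI hab
              by_cases hct : c + 1 < t
              · rw [eJlt _ hct] at hlt ⊢
                exact h.2.2.2.2.2 a I c haIlt hca (by omega) hlt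
              · rw [eJge _ hct] at hlt ⊢
                exact h.2.2.2.2.2 a J c hab hca hcb hlt
            · rw [eout b hbI hbJ] at hlt ⊢
              exact h.2.2.2.2.2 a b c hab hca hcb hlt
    · -- SameColumns
      intro c v
      constructor
      · rintro ⟨r, hc, hv⟩
        exact ⟨_, hsh r c hc, by rw [hval' r c]; exact hv⟩
      · rintro ⟨r, hc, hv⟩
        exact ⟨_, hsh r c hc, by rw [← hval r c]; exact hv⟩
  · -- CASE B : no crossing, full swap of the two rows
    have hnone : ∀ c, 1 ≤ c → c ≤ α J → c < α I → τ J (c-1) < τ I c := by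
      intro c h1 h2 h3
      by_contra hc
      push_neg at hc
      exact hex ⟨c, h1, h2, h3, hc⟩
    set τ'f : Fin ℓ → ℕ → ℕ := fun r c => τ (Equiv.swap I J r) c with hτ'
    set βf : Fin ℓ → ℕ := fun r => α (Equiv.swap I J r) with hβ'
    have eβI : βf I = α J := by simp only [hβ', hswI]
    have eβJ : βf J = α I := by simp only [hβ', hswJ]
    have eβout : ∀ r, r ≠ I → r ≠ J → βf r = α r := by
      intro r h1 h2; simp only [hβ', hout r h1 h2]
    have eI : ∀ c, τ'f I c = τ J c := by intro c; simp only [hτ', hswI]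
    have eJ : ∀ c, τ'f J c = τ I c := by intro c; simp only [hτ', hswJ]
    have eout : ∀ r, r ≠ I → r ≠ J → ∀ c, τ'f r c = τ r c := by
      intro r h1 h2 c; simp only [hτ', hout r h1 h2]
    refine ⟨βf, τ'f, Or.inr hβ', ?_, ⟨?_, ?_, ?_, ?_, ?_, ?_⟩, ?_⟩
    · -- bub
      rw [bub, dif_pos hi]
      by_cases hlt : α J < α I
      · rw [if_pos (show βf ⟨i, Nat.lt_of_succ_lt hi⟩ < βf ⟨i+1, hi⟩ from by
          show βf I < βf J
          rw [eβI, eβJ]; exact hlt)]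
        funext x
        show βf (Equiv.swap I J x) = α x
        simp only [hβ', Equiv.swap_apply_self]
      · rw [if_neg (show ¬ (βf ⟨i, Nat.lt_of_succ_lt hi⟩ < βf ⟨i+1, hi⟩) from by
          show ¬ (βf I < βf J)
          rw [eβI, eβJ]; omega)]
        have heq : α J = α I := by omega
        funext r
        by_cases h1 : r = I
        · subst h1; rw [eβI, heq]
        · by_cases h2 : r = J
          · subst h2; rw [eβJ, heq]
          · exact eβout r h1 h2
    · -- bounds
      intro r c hc
      exact h.1 _ c hc
    · -- injectivity
      intro a c b c' ha hb he
      obtain ⟨h1, h2⟩ := h.2.1 _ c _ c' ha hb he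
      exact ⟨(Equiv.swap I J).injective h1, h2⟩
    · -- surjectivity
      intro v hv1 hv2
      obtain ⟨r, c, hc, hv⟩ := h.2.2.1 v hv1 hv2
      refine ⟨Equiv.swap I J r, c, ?_, ?_⟩
      · show c < α (Equiv.swap I J (Equiv.swap I J r))
        rw [Equiv.swap_apply_self]; exact hc
      · show τ (Equiv.swap I J (Equiv.swap I J r)) c = v
        rw [Equiv.swap_apply_self]; exact hv
    · -- type
      intro a b
      rw [show τ'f a 0 = τ (Equiv.swap I J a) 0 from rfl,
        show τ'f b 0 = τ (Equiv.swap I J b) 0 from rfl,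
        h.2.2.2.1 (Equiv.swap I J a) (Equiv.swap I J b)]
      simp [Equiv.Perm.mul_apply]
    · -- rows
      intro r c hc
      exact h.2.2.2.2.1 _ c hc
    · -- triple
      intro a b c hab hca hcb hlt
      by_cases haI : a = I
      · subst haI
        by_cases hbJ : b = J
        · subst hbJ
          rw [eβI] at hca
          rw [eβJ] at hcb
          rw [eJ, eI] at hlt
          exfalso
          have := hnone (c+1) (by omega) (by omega) hcb
          simp only [Nat.add_sub_cancel] at this
          omega
        · have hbI : b ≠ I := fun hh => absurd (hh ▸ hab) (lt_irrefl I)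
          have hJb : J < b := hgtJ b hbJ hab
          rw [eβI] at hca ⊢
          rw [eβout b hbI hbJ] at hcb
          rw [eI, eout b hbI hbJ] at hlt
          obtain ⟨e1, e2⟩ := h.2.2.2.2.2 J b c hJb hca hcb hlt
          exact ⟨e1, by rw [eI, eout b hbI hbJ]; exact e2⟩
      · by_cases haJ : a = J
        · subst haJ
          have hbI : b ≠ I := fun hh => absurd (hh ▸ hab) (not_lt.mpr (le_of_lt hIJ))
          have hbJ : b ≠ J := fun hh => absurd (hh ▸ hab) (lt_irrefl J)
          rw [eβJ] at hca ⊢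
          rw [eβout b hbI hbJ] at hcb
          rw [eJ, eout b hbI hbJ] at hlt
          obtain ⟨e1, e2⟩ := h.2.2.2.2.2 I b c (lt_trans hIJ hab) hca hcb hlt
          exact ⟨e1, by rw [eJ, eout b hbI hbJ]; exact e2⟩
        · rw [eβout a haI haJ] at hca ⊢
          rw [eout a haI haJ] at hlt ⊢
          by_cases hbI : b = I
          · subst hbI
            have haIlt : a < I := hltI a haI (lt_trans hab hIJ)
            rw [eβI] at hcb
            rw [eI] at hlt ⊢
            exact h.2.2.2.2.2 a J c (lt_trans haIlt hIJ) hca hcb hlt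
          · by_cases hbJ : b = J
            · subst hbJ
              have haIlt : a < I := hltI a haI hab
              rw [eβJ] at hcb
              rw [eJ] at hlt ⊢
              exact h.2.2.2.2.2 a I c haIlt hca hcb hlt
            · rw [eβout b hbI hbJ] at hcb
              rw [eout b hbI hbJ] at hlt ⊢
              exact h.2.2.2.2.2 a b c hab hca hcb hlt
    · -- SameColumns
      intro c v
      constructor
      · rintro ⟨r, hc, hv⟩
        refine ⟨Equiv.swap I J r, ?_, ?_⟩
        · show c < α (Equiv.swap I J (Equiv.swap I J r))
          rw [Equiv.swap_apply_self]; exact hc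
        · show τ (Equiv.swap I J (Equiv.swap I J r)) c = v
          rw [Equiv.swap_apply_self]; exact hv
      · rintro ⟨r, hc, hv⟩
        exact ⟨Equiv.swap I J r, hc, hv⟩
section Backward
open Finset
variable {ℓ n : ℕ}

lemma backwardD {β : Fin ℓ → ℕ} {σ : Equiv.Perm (Fin ℓ)} {τ' : Fin ℓ → ℕ → ℕ}
    {i : ℕ} (hi : i + 1 < ℓ) (h : IsSPCT n β σ τ') (hpos : ∀ r, 0 < β r)
    (hasc : σ ⟨i, Nat.lt_of_succ_lt hi⟩ < σ ⟨i+1, hi⟩) :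
    ∃ (α : Fin ℓ → ℕ) (τ : Fin ℓ → ℕ → ℕ),
      (α = β ∨ α = fun r => β (Equiv.swap ⟨i, Nat.lt_of_succ_lt hi⟩ ⟨i+1, hi⟩ r)) ∧
      bub i β = α ∧
      IsSPCT n α (σ * Equiv.swap ⟨i, Nat.lt_of_succ_lt hi⟩ ⟨i+1, hi⟩) τ ∧
      SameColumns β α τ' τ := by
  set I : Fin ℓ := ⟨i, Nat.lt_of_succ_lt hi⟩ with hIdef
  set J : Fin ℓ := ⟨i+1, hi⟩ with hJdef
  have hIJ : I < J := by simp [hIdef, hJdef, Fin.lt_def]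
  have hIJne : I ≠ J := ne_of_lt hIJ
  have hout : ∀ r : Fin ℓ, r ≠ I → r ≠ J → Equiv.swap I J r = r := fun r h1 h2 =>
    Equiv.swap_apply_of_ne_of_ne h1 h2
  have hswI : Equiv.swap I J I = J := Equiv.swap_apply_left I J
  have hswJ : Equiv.swap I J J = I := Equiv.swap_apply_right I J
  have hu0 : τ' I 0 < τ' J 0 := (h.2.2.2.1 I J).mpr hasc
  have hgtJ : ∀ b : Fin ℓ, b ≠ J → I < b → J < b := by
    intro b h2 hb
    rw [Fin.lt_def] at hb ⊢
    have e2 : (b : ℕ) ≠ i + 1 := fun hh => h2 (Fin.ext hh)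
    simp only [hIdef, hJdef] at *
    omega
  have hltI : ∀ a : Fin ℓ, a ≠ I → a < J → a < I := by
    intro a h1 ha
    rw [Fin.lt_def] at ha ⊢
    have e1 : (a : ℕ) ≠ i := fun hh => h1 (Fin.ext hh)
    simp only [hIdef, hJdef] at *
    omega
  have hne_uv : ∀ c c', τ' I c ≠ τ' J c' ∨ ¬(c < β I) ∨ ¬(c' < β J) := by
    intro c c'
    by_cases h1 : c < β I
    · by_cases h2 : c' < β J
      · refine Or.inl fun he => ?_
        exact hIJne (h.2.1 I c J c' h1 h2 he).1
      · exact Or.inr (Or.inr h2)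
    · exact Or.inr (Or.inl h1)
  by_cases hkeep : (∃ c, 1 ≤ c ∧ c < β I ∧ c < β J ∧ τ' J c < τ' I c) ∨ β J < β I
  · -- KEEP case : shape preserved
    obtain ⟨t, ht1, htq, htp, hqp, hdomlt, hpers⟩ :
        ∃ t, 1 ≤ t ∧ t ≤ β J ∧ t < β I ∧ β J ≤ β I ∧
          (∀ c, c < t → τ' I c < τ' J c) ∧
          (∀ c, t ≤ c → c < β J → c < β I ∧ τ' J c < τ' I c) := by
      by_cases hex : ∃ c, 1 ≤ c ∧ c < β I ∧ c < β J ∧ τ' J c < τ' I c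
      · set t := Nat.find hex with htdef
        obtain ⟨ht1, htp, htq, htv⟩ := Nat.find_spec hex
        rw [← htdef] at ht1 htp htq htv
        have hmin : ∀ c, c < t → ¬(1 ≤ c ∧ c < β I ∧ c < β J ∧ τ' J c < τ' I c) :=
          fun c hc => Nat.find_min hex hc
        have hdomlt : ∀ c, c < t → τ' I c < τ' J c := by
          intro c hc
          rcases Nat.eq_zero_or_pos c with rfl | hc1
          · exact hu0
          · have hnf := hmin c hc
            have h1 : c < β I := by omega
            have h2 : c < β J := by omega
            have : ¬ (τ' J c < τ' I c) := fun hcon => hnf ⟨hc1, h1, h2, hcon⟩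
            rcases (hne_uv c c) with hne | hh | hh
            · omega
            · omega
            · omega
        have hpers : ∀ c, t ≤ c → c < β J → c < β I ∧ τ' J c < τ' I c := by
          intro c hc hcq
          induction c with
          | zero =>
            have : t = 0 := by omega
            omega
          | succ d ih =>
            rcases Nat.lt_or_ge d t with hd | hd
            · have hdt : d + 1 = t := by omega
              rw [hdt]
              exact ⟨htp, htv⟩
            · obtain ⟨hdp, hdv⟩ := ih hd (by omega)
              have hstep : τ' J (d+1) < τ' I d :=
                lt_of_le_of_lt (h.2.2.2.2.1 J d hcq) hdv
              exact h.2.2.2.2.2 I J d hIJ hdp hcq hstep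
        have hqp : β J ≤ β I := by
          have := (hpers (β J - 1) (by omega) (by omega)).1
          omega
        exact ⟨t, ht1, by omega, htp, hqp, hdomlt, hpers⟩
      · -- no flip but β J < β I
        have hqp : β J < β I := hkeep.resolve_left hex
        refine ⟨β J, hpos J, le_refl _, hqp, le_of_lt hqp, ?_, by omega⟩
        intro c hc
        rcases Nat.eq_zero_or_pos c with rfl | hc1
        · exact hu0
        · have : ¬ (τ' J c < τ' I c) := fun hcon => hex ⟨c, hc1, by omega, hc, hcon⟩
          rcases (hne_uv c c) with hne | hh | hh
          · omega
          · omega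
          · omega
    set τf : Fin ℓ → ℕ → ℕ :=
      fun r c => if c < t then τ' (Equiv.swap I J r) c else τ' r c with hτ
    have eout : ∀ r, r ≠ I → r ≠ J → ∀ c, τf r c = τ' r c := by
      intro r h1 h2 c
      simp only [hτ]
      split_ifs with hh
      · rw [hout r h1 h2]
      · rfl
    have eIlt : ∀ c, c < t → τf I c = τ' J c := by
      intro c hc; simp only [hτ, if_pos hc, hswI]
    have eIge : ∀ c, ¬ (c < t) → τf I c = τ' I c := by
      intro c hc; simp only [hτ, if_neg hc]
    have eJlt : ∀ c, c < t → τf J c = τ' I c := by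
      intro c hc; simp only [hτ, if_pos hc, hswJ]
    have eJge : ∀ c, ¬ (c < t) → τf J c = τ' J c := by
      intro c hc; simp only [hτ, if_neg hc]
    have hsh : ∀ (r : Fin ℓ) (d : ℕ), d < β r →
        d < β (if d < t then Equiv.swap I J r else r) := by
      intro r d hd
      by_cases hdt : d < t
      · simp only [if_pos hdt]
        by_cases h1 : r = I
        · subst h1; rw [hswI]; omega
        · by_cases h2 : r = J
          · subst h2; rw [hswJ]; omega
          · rw [hout r h1 h2]; exact hd
      · simp only [if_neg hdt]; exact hd
    have hval : ∀ (r : Fin ℓ) (d : ℕ),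
        τf r d = τ' (if d < t then Equiv.swap I J r else r) d := by
      intro r d; simp only [hτ]; split <;> rfl
    have hval' : ∀ (r : Fin ℓ) (d : ℕ),
        τf (if d < t then Equiv.swap I J r else r) d = τ' r d := by
      intro r d
      simp only [hτ]
      split_ifs with h1
      · rw [Equiv.swap_apply_self]
      · rfl
    -- dominance of row I over row J in the new tableau
    have hdomnew : ∀ c, c < β J → (c < β I) ∧ τf J c < τf I c := by
      intro c hc
      by_cases hct : c < t
      · rw [eIlt _ hct, eJlt _ hct]
        exact ⟨by omega, hdomlt c hct⟩
      · rw [eIge _ hct, eJge _ hct]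
        exact ⟨(hpers c (by omega) hc).1, (hpers c (by omega) hc).2⟩
    refine ⟨β, τf, Or.inl rfl, ?_, ⟨?_, ?_, ?_, ?_, ?_, ?_⟩, ?_⟩
    · rw [bub, dif_pos hi]
      rw [if_neg (not_lt.mpr hqp)]
    · -- bounds
      intro r c hc
      rw [hval]
      exact h.1 _ c (hsh r c hc)
    · -- injectivity
      intro a c b c' ha hb he
      rw [hval, hval] at he
      obtain ⟨hrr, hcc⟩ := h.2.1 _ c _ c' (hsh a c ha) (hsh b c' hb) he
      subst hcc
      refine ⟨?_, rfl⟩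
      by_cases hct : c < t
      · simp only [if_pos hct] at hrr
        exact (Equiv.swap I J).injective hrr
      · simpa only [if_neg hct] using hrr
    · -- surjectivity
      intro v hv1 hv2
      obtain ⟨r, c, hc, hv⟩ := h.2.2.1 v hv1 hv2
      exact ⟨_, c, hsh r c hc, by rw [hval' r c]; exact hv⟩
    · -- type
      intro a b
      have e : ∀ r : Fin ℓ, τf r 0 = τ' (Equiv.swap I J r) 0 := by
        intro r; simp only [hτ, if_pos (show (0:ℕ) < t by omega)]
      rw [e a, e b, h.2.2.2.1 (Equiv.swap I J a) (Equiv.swap I J b)]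
      simp [Equiv.Perm.mul_apply]
    · -- rows
      intro r c hc
      by_cases h1 : r = I
      · subst h1
        by_cases hct : c + 1 < t
        · rw [eIlt _ hct, eIlt _ (by omega)]
          exact h.2.2.2.2.1 J c (by omega)
        · by_cases hct2 : c + 1 = t
          · rw [eIge _ hct, eIlt _ (by omega)]
            have e1 : τ' I (c+1) ≤ τ' I c := h.2.2.2.2.1 I c hc
            have e2 : τ' I c < τ' J c := hdomlt c (by omega)
            omega
          · rw [eIge _ hct, eIge _ (by omega)]
            exact h.2.2.2.2.1 I c hc
      · by_cases h2 : r = J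
        · subst h2
          by_cases hct : c + 1 < t
          · rw [eJlt _ hct, eJlt _ (by omega)]
            exact h.2.2.2.2.1 I c (by omega)
          · by_cases hct2 : c + 1 = t
            · rw [eJge _ hct, eJlt _ (by omega)]
              have e1 : τ' J (c+1) < τ' I (c+1) := (hpers (c+1) (by omega) hc).2
              have e2 : τ' I (c+1) ≤ τ' I c := h.2.2.2.2.1 I c (by omega)
              omega
            · rw [eJge _ hct, eJge _ (by omega)]
              exact h.2.2.2.2.1 J c hc
        · rw [eout r h1 h2, eout r h1 h2]
          exact h.2.2.2.2.1 r c hc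
    · -- triple
      intro a b c hab hca hcb hlt
      by_cases haI : a = I
      · subst haI
        by_cases hbJ : b = J
        · subst hbJ
          obtain ⟨e1, e2⟩ := hdomnew (c+1) hcb
          exact ⟨e1, e2⟩
        · -- (I, b), b > J
          have hbI : b ≠ I := fun hh => absurd (hh ▸ hab) (lt_irrefl I)
          have hJb : J < b := hgtJ b hbJ hab
          rw [eout b hbI hbJ] at hlt ⊢
          by_cases hct : c < t
          · rw [eIlt _ hct] at hlt
            obtain ⟨e1, e2⟩ := h.2.2.2.2.2 J b c hJb (by omega) hcb hlt
            refine ⟨by omega, ?_⟩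
            by_cases hct1 : c + 1 < t
            · rw [eIlt _ hct1]; exact e2
            · rw [eIge _ hct1]
              exact lt_trans e2 (hpers (c+1) (by omega) e1).2
          · rw [eIge _ hct] at hlt
            obtain ⟨e1, e2⟩ := h.2.2.2.2.2 I b c hab hca hcb hlt
            exact ⟨e1, by rw [eIge _ (by omega)]; exact e2⟩
      · by_cases haJ : a = J
        · subst haJ
          -- (J, b), b > J
          have hbI : b ≠ I := fun hh => absurd (hh ▸ hab) (not_lt.mpr (le_of_lt hIJ))
          have hbJ : b ≠ J := fun hh => absurd (hh ▸ hab) (lt_irrefl J)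
          have hJb : J < b := hab
          rw [eout b hbI hbJ] at hlt ⊢
          by_cases hct : c + 1 < t
          · rw [eJlt _ (by omega)] at hlt
            obtain ⟨e1, e2⟩ := h.2.2.2.2.2 I b c (lt_trans hIJ hJb) (by omega) hcb hlt
            exact ⟨by omega, by rw [eJlt _ hct]; exact e2⟩
          · by_cases hct2 : c + 1 = t
            · rw [eJlt _ (by omega)] at hlt
              have e3 : τ' b (c+1) < τ' J c := lt_trans hlt (hdomlt c (by omega))
              obtain ⟨e4, e5⟩ := h.2.2.2.2.2 J b c hJb (by omega) hcb e3
              exact ⟨e4, by rw [eJge _ (by omega)]; exact e5⟩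
            · rw [eJge _ (by omega)] at hlt
              obtain ⟨e1, e2⟩ := h.2.2.2.2.2 J b c hJb hca hcb hlt
              exact ⟨e1, by rw [eJge _ hct]; exact e2⟩
        · -- a outside
          rw [eout a haI haJ] at hlt ⊢
          by_cases hbI : b = I
          · subst hbI
            have haIlt : a < I := hltI a haI (lt_trans hab hIJ)
            by_cases hct : c + 1 < t
            · rw [eIlt _ hct] at hlt ⊢
              exact h.2.2.2.2.2 a J c (lt_trans haIlt hIJ) hca (by omega) hlt
            · rw [eIge _ hct] at hlt ⊢
              exact h.2.2.2.2.2 a I c hab hca hcb hlt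
          · by_cases hbJ : b = J
            · subst hbJ
              have haIlt : a < I := hltI a haI hab
              by_cases hct : c + 1 < t
              · rw [eJlt _ hct] at hlt ⊢
                exact h.2.2.2.2.2 a I c haIlt hca (by omega) hlt
              · rw [eJge _ hct] at hlt ⊢
                exact h.2.2.2.2.2 a J c hab hca hcb hlt
            · rw [eout b hbI hbJ] at hlt ⊢
              exact h.2.2.2.2.2 a b c hab hca hcb hlt
    · -- SameColumns
      intro c v
      constructor
      · rintro ⟨r, hc, hv⟩
        exact ⟨_, hsh r c hc, by rw [hval' r c]; exact hv⟩
      · rintro ⟨r, hc, hv⟩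
        exact ⟨_, hsh r c hc, by rw [← hval r c]; exact hv⟩
  · -- SWAP case : no flip and β I ≤ β J
    have hex : ¬ ∃ c, 1 ≤ c ∧ c < β I ∧ c < β J ∧ τ' J c < τ' I c :=
      fun hc => hkeep (Or.inl hc)
    have hpq : β I ≤ β J := not_lt.mp (fun hc => hkeep (Or.inr hc))
    have hdomfull : ∀ c, c < β I → τ' I c < τ' J c := by
      intro c hc
      rcases Nat.eq_zero_or_pos c with rfl | hc1
      · exact hu0
      · have : ¬ (τ' J c < τ' I c) := fun hcon => hex ⟨c, hc1, hc, by omega, hcon⟩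
        rcases (hne_uv c c) with hne | hh | hh
        · omega
        · omega
        · omega
    set τf : Fin ℓ → ℕ → ℕ := fun r c => τ' (Equiv.swap I J r) c with hτ
    set αf : Fin ℓ → ℕ := fun r => β (Equiv.swap I J r) with hα
    have eαI : αf I = β J := by simp only [hα, hswI]
    have eαJ : αf J = β I := by simp only [hα, hswJ]
    have eαout : ∀ r, r ≠ I → r ≠ J → αf r = β r := by
      intro r h1 h2; simp only [hα, hout r h1 h2]
    have eI : ∀ c, τf I c = τ' J c := by intro c; simp only [hτ, hswI]
    have eJ : ∀ c, τf J c = τ' I c := by intro c; simp only [hτ, hswJ]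
    have eout : ∀ r, r ≠ I → r ≠ J → ∀ c, τf r c = τ' r c := by
      intro r h1 h2 c; simp only [hτ, hout r h1 h2]
    refine ⟨αf, τf, Or.inr hα, ?_, ⟨?_, ?_, ?_, ?_, ?_, ?_⟩, ?_⟩
    · -- bub
      rw [bub, dif_pos hi]
      by_cases hlt : β I < β J
      · rw [if_pos hlt]
      · have heq : β I = β J := by omega
        rw [if_neg hlt]
        funext r
        by_cases h1 : r = I
        · subst h1; rw [eαI, heq]
        · by_cases h2 : r = J
          · subst h2; rw [eαJ, heq]
          · exact (eαout r h1 h2).symm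
    · -- bounds
      intro r c hc
      exact h.1 _ c hc
    · -- injectivity
      intro a c b c' ha hb he
      obtain ⟨h1, h2⟩ := h.2.1 _ c _ c' ha hb he
      exact ⟨(Equiv.swap I J).injective h1, h2⟩
    · -- surjectivity
      intro v hv1 hv2
      obtain ⟨r, c, hc, hv⟩ := h.2.2.1 v hv1 hv2
      refine ⟨Equiv.swap I J r, c, ?_, ?_⟩
      · show c < β (Equiv.swap I J (Equiv.swap I J r))
        rw [Equiv.swap_apply_self]; exact hc
      · show τ' (Equiv.swap I J (Equiv.swap I J r)) c = v
        rw [Equiv.swap_apply_self]; exact hv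
    · -- type
      intro a b
      rw [show τf a 0 = τ' (Equiv.swap I J a) 0 from rfl,
        show τf b 0 = τ' (Equiv.swap I J b) 0 from rfl,
        h.2.2.2.1 (Equiv.swap I J a) (Equiv.swap I J b)]
      simp [Equiv.Perm.mul_apply]
    · -- rows
      intro r c hc
      exact h.2.2.2.2.1 _ c hc
    · -- triple
      intro a b c hab hca hcb hlt
      by_cases haI : a = I
      · subst haI
        by_cases hbJ : b = J
        · subst hbJ
          rw [eαI] at hca ⊢
          rw [eαJ] at hcb
          refine ⟨by omega, ?_⟩
          rw [eJ, eI]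
          exact hdomfull (c+1) hcb
        · have hbI : b ≠ I := fun hh => absurd (hh ▸ hab) (lt_irrefl I)
          have hJb : J < b := hgtJ b hbJ hab
          rw [eαI] at hca ⊢
          rw [eαout b hbI hbJ] at hcb
          rw [eI, eout b hbI hbJ] at hlt
          obtain ⟨e1, e2⟩ := h.2.2.2.2.2 J b c hJb hca hcb hlt
          exact ⟨e1, by rw [eI, eout b hbI hbJ]; exact e2⟩
      · by_cases haJ : a = J
        · subst haJ
          have hbI : b ≠ I := fun hh => absurd (hh ▸ hab) (not_lt.mpr (le_of_lt hIJ))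
          have hbJ : b ≠ J := fun hh => absurd (hh ▸ hab) (lt_irrefl J)
          rw [eαJ] at hca ⊢
          rw [eαout b hbI hbJ] at hcb
          rw [eJ, eout b hbI hbJ] at hlt
          obtain ⟨e1, e2⟩ := h.2.2.2.2.2 I b c (lt_trans hIJ hab) hca hcb hlt
          exact ⟨e1, by rw [eJ, eout b hbI hbJ]; exact e2⟩
        · rw [eαout a haI haJ] at hca ⊢
          rw [eout a haI haJ] at hlt ⊢
          by_cases hbI : b = I
          · subst hbI
            have haIlt : a < I := hltI a haI (lt_trans hab hIJ)
            rw [eαI] at hcb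
            rw [eI] at hlt ⊢
            exact h.2.2.2.2.2 a J c (lt_trans haIlt hIJ) hca hcb hlt
          · by_cases hbJ : b = J
            · subst hbJ
              have haIlt : a < I := hltI a haI hab
              rw [eαJ] at hcb
              rw [eJ] at hlt ⊢
              exact h.2.2.2.2.2 a I c haIlt hca hcb hlt
            · rw [eαout b hbI hbJ] at hcb
              rw [eout b hbI hbJ] at hlt ⊢
              exact h.2.2.2.2.2 a b c hab hca hcb hlt
    · -- SameColumns
      intro c v
      constructor
      · rintro ⟨r, hc, hv⟩
        refine ⟨Equiv.swap I J r, ?_, ?_⟩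
        · show c < β (Equiv.swap I J (Equiv.swap I J r))
          rw [Equiv.swap_apply_self]; exact hc
        · show τ' (Equiv.swap I J (Equiv.swap I J r)) c = v
          rw [Equiv.swap_apply_self]; exact hv
      · rintro ⟨r, hc, hv⟩
        exact ⟨Equiv.swap I J r, hc, hv⟩

end Backward

/-- Let `λ` be a partition, `σ ∈ S_ℓ`, and `i` with `ℓ(σsᵢ) < ℓ(σ)`.  The map
`ψ^{σsᵢ}_σ = φ_{σsᵢ} ∘ ρ_σ` — characterized as the unique column-set preserving
correspondence — maps `SPCT^σ(α)` bijectively onto `⨆_{β : α = β∙πᵢ} SPCT^{σsᵢ}(β)` for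
every composition `α` rearranging `λ`, and it preserves descent sets.  (Bijectivity is
expressed by existence and uniqueness in both directions.) -/
theorem psi_bijection {ℓ n : ℕ} (lam : Fin ℓ → ℕ) (hpos : ∀ i, 0 < lam i)
    (hdec : Antitone lam) (hsum : ∑ i, lam i = n)
    (σ : Equiv.Perm (Fin ℓ)) (i : ℕ) (hi : i + 1 < ℓ)
    (hlen : permLength (σ * sPerm ℓ i) < permLength σ) :
    (∀ (π : Equiv.Perm (Fin ℓ)) (τ : Fin ℓ → ℕ → ℕ),
      IsSPCT n (fun r => lam (π r)) σ τ →
      ∃ (β : Fin ℓ → ℕ) (τ' : Fin ℓ → ℕ → ℕ),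
        (∃ π' : Equiv.Perm (Fin ℓ), β = fun r => lam (π' r)) ∧
        bub i β = (fun r => lam (π r)) ∧
        IsSPCT n β (σ * sPerm ℓ i) τ' ∧
        SameColumns (fun r => lam (π r)) β τ τ' ∧
        (∀ d : ℕ, IsDescent (fun r => lam (π r)) τ d ↔ IsDescent β τ' d) ∧
        (∀ (β₂ : Fin ℓ → ℕ) (τ₂ : Fin ℓ → ℕ → ℕ),
          (∃ π' : Equiv.Perm (Fin ℓ), β₂ = fun r => lam (π' r)) →
          bub i β₂ = (fun r => lam (π r)) →
          IsSPCT n β₂ (σ * sPerm ℓ i) τ₂ →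
          SameColumns (fun r => lam (π r)) β₂ τ τ₂ →
          β₂ = β ∧ ∀ (r : Fin ℓ) (c : ℕ), c < β r → τ₂ r c = τ' r c)) ∧
    (∀ (β : Fin ℓ → ℕ) (τ' : Fin ℓ → ℕ → ℕ),
      (∃ π' : Equiv.Perm (Fin ℓ), β = fun r => lam (π' r)) →
      IsSPCT n β (σ * sPerm ℓ i) τ' →
      ∃ (π : Equiv.Perm (Fin ℓ)) (τ : Fin ℓ → ℕ → ℕ),
        IsSPCT n (fun r => lam (π r)) σ τ ∧
        bub i β = (fun r => lam (π r)) ∧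
        SameColumns (fun r => lam (π r)) β τ τ' ∧
        (∀ (π₂ : Equiv.Perm (Fin ℓ)) (τ₂ : Fin ℓ → ℕ → ℕ),
          IsSPCT n (fun r => lam (π₂ r)) σ τ₂ →
          SameColumns (fun r => lam (π₂ r)) β τ₂ τ' →
          (fun r => lam (π₂ r)) = (fun r => lam (π r)) ∧
          ∀ (r : Fin ℓ) (c : ℕ), c < lam (π r) → τ₂ r c = τ r c)) := by
  set I : Fin ℓ := ⟨i, Nat.lt_of_succ_lt hi⟩ with hIdef
  set J : Fin ℓ := ⟨i+1, hi⟩ with hJdef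
  have hs : sPerm ℓ i = Equiv.swap I J := by rw [sPerm, dif_pos hi]
  have hdesc : σ J < σ I := desc_of_len hi hlen
  have hswI : Equiv.swap I J I = J := Equiv.swap_apply_left I J
  have hswJ : Equiv.swap I J J = I := Equiv.swap_apply_right I J
  constructor
  · -- forward direction
    intro π τ hτ
    have hposα : ∀ r, 0 < (fun r => lam (π r)) r := fun r => hpos _
    obtain ⟨β, τ', hcase, hbub, hspct', hcols⟩ := forwardC hi hτ hposα hdesc
    have hform : ∃ π' : Equiv.Perm (Fin ℓ), β = fun r => lam (π' r) := by
      rcases hcase with h1 | h1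
      · exact ⟨π, h1⟩
      · refine ⟨π * Equiv.swap I J, ?_⟩
        rw [h1]
        funext r
        simp [Equiv.Perm.mul_apply]
        rfl
    have hposβ : ∀ r, 0 < β r := by
      obtain ⟨π', hπ'⟩ := hform
      intro r
      have : β r = lam (π' r) := by rw [hπ']
      rw [this]; exact hpos _
    refine ⟨β, τ', hform, hbub, by rw [hs]; exact hspct', hcols,
      fun d => ⟨descent_transfer hcols, descent_transfer (samecol_symm hcols)⟩, ?_⟩
    intro β₂ τ₂ hform2 _hbub2 hspct2 hcols2
    rw [hs] at hspct2
    have hposβ₂ : ∀ r, 0 < β₂ r := by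
      obtain ⟨π2, hπ2⟩ := hform2
      intro r
      have : β₂ r = lam (π2 r) := by rw [hπ2]
      rw [this]; exact hpos _
    have hsame : SameColumns β₂ β τ₂ τ' := samecol_trans (samecol_symm hcols2) hcols
    obtain ⟨heq, hval⟩ := spct_unique hspct2 hspct' hposβ₂ hposβ hsame
    exact ⟨heq, fun r c hc => hval r c (by rw [heq]; exact hc)⟩
  · -- backward direction
    intro β τ' hform hspct'
    obtain ⟨π', hπ'⟩ := hform
    rw [hs] at hspct'
    have hposβ : ∀ r, 0 < β r := by
      intro r
      have : β r = lam (π' r) := by rw [hπ']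
      rw [this]; exact hpos _
    have hasc : (σ * Equiv.swap I J) I < (σ * Equiv.swap I J) J := by
      simp only [Equiv.Perm.mul_apply, hswI, hswJ]
      exact hdesc
    obtain ⟨αf, τ, hcase, hbub, hspctf, hcolsf⟩ := backwardD hi hspct' hposβ hasc
    have hσσ : (σ * Equiv.swap I J) * Equiv.swap I J = σ := by
      rw [mul_assoc, Equiv.swap_mul_self, mul_one]
    rw [hσσ] at hspctf
    have hformα : ∃ π : Equiv.Perm (Fin ℓ), αf = fun r => lam (π r) := by
      rcases hcase with h1 | h1
      · exact ⟨π', by rw [h1, hπ']⟩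
      · refine ⟨π' * Equiv.swap I J, ?_⟩
        rw [h1, hπ']
        funext r
        simp [Equiv.Perm.mul_apply]
        rfl
    obtain ⟨π, hπ⟩ := hformα
    rw [hπ] at hspctf hbub hcolsf
    refine ⟨π, τ, hspctf, hbub, samecol_symm hcolsf, ?_⟩
    intro π₂ τ₂ hspct₂ hcols₂
    have hpos₂ : ∀ r, 0 < (fun r => lam (π₂ r)) r := fun r => hpos _
    have hposg : ∀ r, 0 < (fun r => lam (π r)) r := fun r => hpos _
    have hsame : SameColumns (fun r => lam (π₂ r)) (fun r => lam (π r)) τ₂ τ :=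
      samecol_trans hcols₂ (samecol_symm (samecol_symm hcolsf))
    obtain ⟨heq, hval⟩ := spct_unique hspct₂ hspctf hpos₂ hposg hsame
    refine ⟨heq, fun r c hc => hval r c ?_⟩
    have : lam (π₂ r) = lam (π r) := congrFun heq r
    rw [this]; exact hc
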